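/- Let U be a thick triangulated subcategory of a direct sum of triangulated categories D = ⊕_{j ∈ Λ} D_j. If U is connected (nonzero and admits no decomposition into two nonzero triangulated subcategories with no morphisms between them), then U is contained in D_j for some j ∈ Λ. -/

import Mathlib

/-!
STATEMENT 2: A connected thick triangulated subcategory `U` of a direct sum
`D = ⊕_{j ∈ Λ} D_j` of triangulated categories is contained in `D_j` for some `j`.
The direct sum is formalized internally: a family of triangulated subcategories `S j`
of an ambient pretriangulated category `D`, pairwise Hom-orthogonal, such that every
object of `D` is a finite direct sum of objects of the `S j`.
-/

open CategoryTheory Limits Pretriangulated Triangulated ZeroObject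

universe v u

variable {D : Type u} [Category.{v} D] [HasZeroObject D] [HasShift D ℤ] [Preadditive D]
  [∀ n : ℤ, (shiftFunctor D n).Additive] [Pretriangulated D]

namespace CategoryTheory.Triangulated

variable (D) in
/-- The structure `Triangulated.Subcategory` as it stood in Mathlib (December 2024). -/
structure Subcategory where
  P : D → Prop
  zero' : ∃ (Z : D) (_ : IsZero Z), P Z
  shift (X : D) (n : ℤ) : P X → P (X⟦n⟧)
  ext₂' (T : Triangle D) (_ : T ∈ distTriang D) : P T.obj₁ → P T.obj₃ →
    ObjectProperty.isoClosure P T.obj₂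

end CategoryTheory.Triangulated

/-- The iterated binary biproduct of a list of objects. -/
noncomputable def sumList : List D → D
  | [] => 0
  | X :: l => X ⊞ sumList l

/-- A triangulated subcategory is thick if it is closed under direct summands. -/
def IsThick (S : Triangulated.Subcategory D) : Prop :=
  ∀ (X Y Z : D), Nonempty (Z ≅ X ⊞ Y) → S.P Z → S.P X

/-- There are no nonzero morphisms from objects satisfying `P` to objects satisfying `Q`. -/
def HomOrth (P Q : D → Prop) : Prop :=
  ∀ ⦃X Y : D⦄ (f : X ⟶ Y), P X → Q Y → f = 0

/-- The class of objects `P` (e.g. the objects of a triangulated subcategory) is connected: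
it contains a nonzero object, and for any two triangulated subcategories `S₁, S₂` contained
in `P`, with no morphisms between them in either direction, such that every object of `P`
decomposes as a direct sum of an object of `S₁` and an object of `S₂`, one of `S₁`, `S₂`
consists of zero objects only. -/
def IsConnectedP (P : D → Prop) : Prop :=
  (∃ X : D, P X ∧ ¬ IsZero X) ∧
  ∀ S₁ S₂ : Triangulated.Subcategory D,
    (∀ X, S₁.P X → P X) → (∀ X, S₂.P X → P X) →
    HomOrth S₁.P S₂.P → HomOrth S₂.P S₁.P →
    (∀ X, P X → ∃ X₁ X₂, S₁.P X₁ ∧ S₂.P X₂ ∧ Nonempty (X ≅ X₁ ⊞ X₂)) →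
    (∀ X, S₁.P X → IsZero X) ∨ (∀ X, S₂.P X → IsZero X)

/-- The family of triangulated subcategories `S j` realizes the ambient category as the
direct sum `⊕_j S j`. -/
def IsDirectSumDecomp {ι : Type*} (S : ι → Triangulated.Subcategory D) : Prop :=
  (∀ i, ObjectProperty.IsClosedUnderIsomorphisms (S i).P) ∧
  (∀ i j, i ≠ j → HomOrth (S i).P (S j).P) ∧
  (∀ X : D, ∃ l : List D, (∀ Y ∈ l, ∃ i, (S i).P Y) ∧ Nonempty (X ≅ sumList l))

namespace CategoryTheory.Triangulated.Subcategory

lemma zero (S : Subcategory D) [ObjectProperty.IsClosedUnderIsomorphisms S.P] : S.P 0 := by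
  obtain ⟨Z, hZ, h⟩ := S.zero'
  exact ObjectProperty.prop_of_iso S.P hZ.isoZero h

lemma ext₂ (S : Subcategory D) [ObjectProperty.IsClosedUnderIsomorphisms S.P]
    (T : Triangle D) (hT : T ∈ distTriang D) (h₁ : S.P T.obj₁) (h₃ : S.P T.obj₃) :
    S.P T.obj₂ := by
  obtain ⟨Y, hY, ⟨e⟩⟩ := S.ext₂' T hT h₁ h₃
  exact ObjectProperty.prop_of_iso S.P e.symm hY

end CategoryTheory.Triangulated.Subcategory

section Aux

@[simp] lemma sumList_nil : sumList ([] : List D) = 0 := rfl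

@[simp] lemma sumList_cons (X : D) (l : List D) : sumList (X :: l) = biprod X (sumList l) := rfl

lemma isThick_iso {U : Triangulated.Subcategory D} (hU : IsThick U) {Z X : D}
    (e : Z ≅ X) (hZ : U.P Z) : U.P X := by
  refine hU X 0 Z ⟨Iso.mk (e.hom ≫ biprod.inl) (biprod.fst ≫ e.inv) (by simp) ?_⟩ hZ
  apply biprod.hom_ext
  · simp
  · apply (isZero_zero D).eq_of_tgt

lemma isThick_fst {U : Triangulated.Subcategory D} (hU : IsThick U) {Z X Y : D}
    (e : Z ≅ X ⊞ Y) (hZ : U.P Z) : U.P X := hU X Y Z ⟨e⟩ hZ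

lemma isThick_snd {U : Triangulated.Subcategory D} (hU : IsThick U) {Z X Y : D}
    (e : Z ≅ X ⊞ Y) (hZ : U.P Z) : U.P Y :=
  hU Y X Z ⟨e ≪≫ biprod.braiding X Y⟩ hZ

lemma mem_of_mem_sumList {U : Triangulated.Subcategory D} (hU : IsThick U) :
    ∀ (l : List D), U.P (sumList l) → ∀ Y ∈ l, U.P Y := by
  intro l
  induction l with
  | nil => intro _ Y hY; simp at hY
  | cons X l ih =>
    intro h Y hY
    rw [sumList_cons] at h
    rcases List.mem_cons.1 hY with rfl | hY
    · exact isThick_fst hU (Iso.refl _) h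
    · exact ih (isThick_snd hU (Iso.refl _) h) Y hY

lemma isZero_sumList : ∀ (l : List D), (∀ Y ∈ l, IsZero Y) → IsZero (sumList l) := by
  intro l
  induction l with
  | nil => intro _; simpa using isZero_zero D
  | cons X l ih =>
    intro h
    rw [sumList_cons, biprod_isZero_iff]
    exact ⟨h X (List.mem_cons_self), ih fun Y hY => h Y (List.mem_cons_of_mem _ hY)⟩

lemma sumList_hom_zero {W : D} :
    ∀ (l : List D), (∀ Y ∈ l, ∀ f : Y ⟶ W, f = 0) → ∀ f : sumList l ⟶ W, f = 0 := by
  intro l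
  induction l with
  | nil => intro _ f; exact (isZero_zero D).eq_of_src f 0
  | cons X l ih =>
    intro h f
    change f = (0 : X ⊞ sumList l ⟶ W)
    apply biprod.hom_ext' <;> rw [comp_zero]
    · exact h X (List.mem_cons_self) _
    · exact ih (fun Y hY g => h Y (List.mem_cons_of_mem _ hY) g) _

lemma hom_sumList_zero {W : D} :
    ∀ (l : List D), (∀ Y ∈ l, ∀ f : W ⟶ Y, f = 0) → ∀ f : W ⟶ sumList l, f = 0 := by
  intro l
  induction l with
  | nil => intro _ f; exact (isZero_zero D).eq_of_tgt f 0
  | cons X l ih =>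
    intro h f
    change f = (0 : W ⟶ X ⊞ sumList l)
    apply biprod.hom_ext <;> rw [zero_comp]
    · exact h X (List.mem_cons_self) _
    · exact ih (fun Y hY g => h Y (List.mem_cons_of_mem _ hY) g) _

lemma subcat_biprod (S : Triangulated.Subcategory D) [ObjectProperty.IsClosedUnderIsomorphisms S.P]
    {X Y : D} (hX : S.P X) (hY : S.P Y) : S.P (X ⊞ Y) :=
  S.ext₂ _ (binaryBiproductTriangle_distinguished X Y) hX hY

lemma subcat_sumList (S : Triangulated.Subcategory D) [ObjectProperty.IsClosedUnderIsomorphisms S.P] :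
    ∀ (l : List D), (∀ Y ∈ l, S.P Y) → S.P (sumList l) := by
  intro l
  induction l with
  | nil => intro _; simpa using S.zero
  | cons X l ih =>
    intro h
    rw [sumList_cons]
    exact subcat_biprod S (h X (List.mem_cons_self))
      (ih fun Y hY => h Y (List.mem_cons_of_mem _ hY))

lemma sumList_split (p : D → Prop) :
    ∀ (l : List D), ∃ l₁ l₂ : List D,
      (∀ Y ∈ l₁, Y ∈ l ∧ p Y) ∧ (∀ Y ∈ l₂, Y ∈ l ∧ ¬ p Y) ∧
      Nonempty (sumList l ≅ sumList l₁ ⊞ sumList l₂) := by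
  intro l
  induction l with
  | nil =>
    refine ⟨[], [], by simp, by simp, ⟨IsZero.iso ?_ ?_⟩⟩
    · simpa using isZero_zero D
    · rw [biprod_isZero_iff]
      constructor <;> simpa using isZero_zero D
  | cons X l ih =>
    obtain ⟨l₁, l₂, h₁, h₂, ⟨e⟩⟩ := ih
    by_cases hX : p X
    · refine ⟨X :: l₁, l₂, ?_, ?_, ⟨?_⟩⟩
      · intro Y hY
        rcases List.mem_cons.1 hY with rfl | hY
        · exact ⟨List.mem_cons_self, hX⟩
        · exact ⟨List.mem_cons_of_mem _ (h₁ Y hY).1, (h₁ Y hY).2⟩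
      · exact fun Y hY => ⟨List.mem_cons_of_mem _ (h₂ Y hY).1, (h₂ Y hY).2⟩
      · rw [sumList_cons, sumList_cons]
        exact (biprod.mapIso (Iso.refl X) e) ≪≫ (biprod.associator _ _ _).symm
    · refine ⟨l₁, X :: l₂, ?_, ?_, ⟨?_⟩⟩
      · exact fun Y hY => ⟨List.mem_cons_of_mem _ (h₁ Y hY).1, (h₁ Y hY).2⟩
      · intro Y hY
        rcases List.mem_cons.1 hY with rfl | hY
        · exact ⟨List.mem_cons_self, hX⟩
        · exact ⟨List.mem_cons_of_mem _ (h₂ Y hY).1, (h₂ Y hY).2⟩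
      · rw [sumList_cons, sumList_cons]
        exact (biprod.mapIso (Iso.refl X) e) ≪≫ (biprod.associator _ _ _).symm ≪≫
          (biprod.mapIso (biprod.braiding X (sumList l₁)) (Iso.refl _)) ≪≫
          biprod.associator _ _ _

/-- Biorthogonality to a class of objects closed under shifts. -/
def Perp (Q : D → Prop) (X : D) : Prop :=
  ∀ W : D, Q W → (∀ f : X ⟶ W, f = 0) ∧ (∀ f : W ⟶ X, f = 0)

lemma perp_shift {Q : D → Prop} (hQ : ∀ (X : D) (n : ℤ), Q X → Q (X⟦n⟧))
    {X : D} (hX : Perp Q X) (n : ℤ) : Perp Q (X⟦n⟧) := by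
  intro W hW
  constructor
  · intro f
    have hg : (shiftEquiv D n).unitIso.hom.app X ≫ (shiftFunctor D (-n)).map f = 0 :=
      (hX (W⟦-n⟧) (hQ W (-n) hW)).1 _
    have : (shiftFunctor D (-n)).map f = 0 := by
      exact (cancel_epi ((shiftEquiv D n).unitIso.hom.app X)).1 (hg.trans comp_zero.symm)
    exact (shiftFunctor D (-n)).map_injective (by rw [this, Functor.map_zero])
  · intro f
    have hg : (shiftFunctor D (-n)).map f ≫ (shiftEquiv D n).unitIso.inv.app X = 0 :=
      (hX (W⟦-n⟧) (hQ W (-n) hW)).2 _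
    have : (shiftFunctor D (-n)).map f = 0 := by
      exact (cancel_mono ((shiftEquiv D n).unitIso.inv.app X)).1 (hg.trans zero_comp.symm)
    exact (shiftFunctor D (-n)).map_injective (by rw [this, Functor.map_zero])

end Aux

theorem stmt2 {Λ : Type*} (S : Λ → Triangulated.Subcategory D)
    (hS : IsDirectSumDecomp S) (hSthick : ∀ j, IsThick (S j))
    (U : Triangulated.Subcategory D) (hUthick : IsThick U)
    (hUconn : IsConnectedP U.P) :
    ∃ j : Λ, ∀ X : D, U.P X → (S j).P X := by
  obtain ⟨hiso, horth, hdec⟩ := hS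
  obtain ⟨⟨X₀, hX₀U, hX₀⟩, hconn⟩ := hUconn
  have hU0 : U.P (0 : D) := by
    obtain ⟨Z, hZ, hZU⟩ := U.zero'
    exact isThick_iso hUthick hZ.isoZero hZU
  -- pick a nonzero direct summand of X₀ lying in some S j
  obtain ⟨l, hl, ⟨e⟩⟩ := hdec X₀
  have : ∃ Y ∈ l, ¬ IsZero Y := by
    by_contra h
    push_neg at h
    exact hX₀ (IsZero.of_iso (isZero_sumList l h) e)
  obtain ⟨Y₀, hY₀l, hY₀⟩ := this
  obtain ⟨j, hY₀j⟩ := hl Y₀ hY₀l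
  haveI : ObjectProperty.IsClosedUnderIsomorphisms (S j).P := hiso j
  have hY₀U : U.P Y₀ := mem_of_mem_sumList hUthick l (isThick_iso hUthick e hX₀U) Y₀ hY₀l
  refine ⟨j, ?_⟩
  -- the two orthogonal subcategories of U
  let S₁ : Triangulated.Subcategory D :=
    { P := fun X => U.P X ∧ (S j).P X
      zero' := ⟨0, isZero_zero D, hU0, (S j).zero⟩
      shift := fun X n hX => ⟨U.shift X n hX.1, (S j).shift X n hX.2⟩
      ext₂' := fun T hT h₁ h₃ => by
        refine ObjectProperty.le_isoClosure _ _ ⟨?_, (S j).ext₂ T hT h₁.2 h₃.2⟩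
        obtain ⟨Y, hY, ⟨e'⟩⟩ := U.ext₂' T hT h₁.1 h₃.1
        exact isThick_iso hUthick e'.symm hY }
  have hperp0 : Perp (S j).P (0 : D) := fun W _ =>
    ⟨fun f => (isZero_zero D).eq_of_src f 0, fun f => (isZero_zero D).eq_of_tgt f 0⟩
  let S₂ : Triangulated.Subcategory D :=
    { P := fun X => U.P X ∧ Perp (S j).P X
      zero' := ⟨0, isZero_zero D, hU0, hperp0⟩
      shift := fun X n hX => ⟨U.shift X n hX.1, perp_shift (S j).shift hX.2 n⟩
      ext₂' := fun T hT h₁ h₃ => by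
        refine ObjectProperty.le_isoClosure _ _ ⟨?_, ?_⟩
        · obtain ⟨Y, hY, ⟨e'⟩⟩ := U.ext₂' T hT h₁.1 h₃.1
          exact isThick_iso hUthick e'.symm hY
        · intro W hW
          constructor
          · intro f
            obtain ⟨g, hg⟩ := Pretriangulated.Triangle.yoneda_exact₂ T hT f
              ((h₁.2 W hW).1 _)
            rw [hg, (h₃.2 W hW).1 g, comp_zero]
          · intro f
            obtain ⟨g, hg⟩ := Pretriangulated.Triangle.coyoneda_exact₂ T hT f
              ((h₃.2 W hW).2 _)
            rw [hg, (h₁.2 W hW).2 g, zero_comp] }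
  -- every object of U decomposes into S₁ ⊞ S₂ parts
  have hdecomp : ∀ X, U.P X → ∃ X₁ X₂, S₁.P X₁ ∧ S₂.P X₂ ∧ Nonempty (X ≅ X₁ ⊞ X₂) := by
    intro X hX
    obtain ⟨l', hl', ⟨e'⟩⟩ := hdec X
    obtain ⟨l₁, l₂, h₁, h₂, ⟨es⟩⟩ := sumList_split (S j).P l'
    have eX : X ≅ sumList l₁ ⊞ sumList l₂ := e' ≪≫ es
    have hU₁ : U.P (sumList l₁) := isThick_fst hUthick eX hX
    have hU₂ : U.P (sumList l₂) := isThick_snd hUthick eX hX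
    refine ⟨sumList l₁, sumList l₂, ⟨hU₁, subcat_sumList (S j) l₁ fun Y hY => (h₁ Y hY).2⟩,
      ⟨hU₂, ?_⟩, ⟨eX⟩⟩
    intro W hW
    have key : ∀ Y ∈ l₂, (∀ f : Y ⟶ W, f = 0) ∧ (∀ f : W ⟶ Y, f = 0) := by
      intro Y hY
      obtain ⟨hYl', hYnj⟩ := h₂ Y hY
      obtain ⟨i, hYi⟩ := hl' Y hYl'
      have hij : i ≠ j := by
        rintro rfl
        exact hYnj hYi
      exact ⟨fun f => horth i j hij f hYi hW, fun f => horth j i (Ne.symm hij) f hW hYi⟩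
    exact ⟨sumList_hom_zero l₂ (fun Y hY => (key Y hY).1),
      hom_sumList_zero l₂ (fun Y hY => (key Y hY).2)⟩
  -- apply connectedness
  rcases hconn S₁ S₂ (fun X hX => hX.1) (fun X hX => hX.1)
      (fun X Y f hX hY => (hY.2 X hX.2).2 f)
      (fun X Y f hX hY => (hX.2 Y hY.2).1 f) hdecomp with h | h
  · exact absurd (h Y₀ ⟨hY₀U, hY₀j⟩) hY₀
  · intro X hX
    obtain ⟨X₁, X₂, hX₁, hX₂, ⟨eX⟩⟩ := hdecomp X hX
    have hz : IsZero X₂ := h X₂ hX₂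
    have e₂ : X₁ ⊞ X₂ ≅ X₁ := by
      refine Iso.mk biprod.fst biprod.inl ?_ (by simp)
      apply biprod.hom_ext
      · simp
      · apply hz.eq_of_tgt
    exact ObjectProperty.prop_of_iso (S j).P (eX ≪≫ e₂).symm hX₁.2
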